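/- Let μ = (μ₁, μ₂, μ₃) ∈ ℝ³, let M(v) = (μ₁v₁, μ₂v₂, μ₃v₃), let σ ∈ ℝ³ with |σ| = 1, and define ν : ℝ³ → ℝ³ by ν(v) = (μ₁² + μ₂² + μ₃² − |M(σ)|²)·v − M(M(v)) + ⟨v, M(σ)⟩·M(σ). Then Σ_{i=1}^{3} μ_i · (e_i × ν(e_i)) = M(M(σ)) × M(σ). -/

import Mathlib

open Matrix

/-- The Milnor map: `M(v) = (μ₁v₁, μ₂v₂, μ₃v₃)`. -/
def milnorMap (μ v : Fin 3 → ℝ) : Fin 3 → ℝ := fun i => μ i * v i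

/-- The divergence of the first vertical Newton tensor
`ν(v) = (‖μ‖² − |Mσ|²)v − M²(v) + ⟨v, Mσ⟩Mσ` of a unit vector field `σ` is
`Σᵢ μᵢ (eᵢ × ν(eᵢ)) = M²(σ) × M(σ)`. -/
theorem div_newton_one (μ σ : Fin 3 → ℝ) (hσ : σ ⬝ᵥ σ = 1)
    (ν : (Fin 3 → ℝ) → (Fin 3 → ℝ))
    (hν : ∀ v, ν v =
      (μ 0 ^ 2 + μ 1 ^ 2 + μ 2 ^ 2 - milnorMap μ σ ⬝ᵥ milnorMap μ σ) • v -
        milnorMap μ (milnorMap μ v) + (v ⬝ᵥ milnorMap μ σ) • milnorMap μ σ) :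
    ∑ i : Fin 3, μ i • ((Pi.single i 1 : Fin 3 → ℝ) ⨯₃ ν (Pi.single i 1)) =
      milnorMap μ (milnorMap μ σ) ⨯₃ milnorMap μ σ := by
  have hσ' : σ 0 * σ 0 + σ 1 * σ 1 + σ 2 * σ 2 = 1 := by
    simpa [dotProduct, Fin.sum_univ_three] using hσ
  funext j
  simp only [Fin.sum_univ_three, hν, milnorMap, crossProduct, dotProduct,
    Fin.sum_univ_three, Pi.single, Function.update, Pi.add_apply, Pi.sub_apply,
    Pi.smul_apply, smul_eq_mul, LinearMap.mk₂_apply, Pi.zero_apply, cons_val_zero,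
    cons_val_one, head_cons, cons_val_two, tail_cons]
  fin_cases j <;>
    simp <;> nlinarith [hσ', sq_nonneg (σ 0), sq_nonneg (σ 1), sq_nonneg (σ 2)]
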